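/- Let L be a finite first-order language (finitely many function symbols, including constants, and finitely many relation symbols) and φ an L-sentence. The following are equivalent: (i) there is an existential L-sentence χ such that for every nonempty L-structure M, M satisfies χ if and only if some substructure of M satisfies φ; (ii) there is an L-sentence χ with the same property; (iii) every nonempty L-structure B satisfying φ has a finite subset s such that every nonempty L-structure N having the fragment (B, s) has a substructure satisfying φ; (iv) there is a natural number n such that every nonempty L-structure B satisfying φ has a subset s of at most n elements such that every nonempty L-structure N having the fragment (B, s) has a substructure satisfying φ. -/

import Mathlib

open FirstOrder Language Structure

/-- `N` has the fragment `(B, s)`: there is an injection `j : s → N` preserving and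
reflecting all relations on tuples from `s`, and agreeing with the partial functions of the
fragment: values of function symbols on tuples from `s` that lie in `s` are mapped by `j` to
the corresponding values in `N`, and conversely values in `N` lying in the range of `j` come
from values lying in `s`. -/
def HasFragment (L : FirstOrder.Language) {B : Type*} [L.Structure B] (s : Set B)
    (N : Type*) [L.Structure N] : Prop :=
  ∃ j : Set.Elem s → N, Function.Injective j ∧
    (∀ (n : ℕ) (R : L.Relations n) (x : Fin n → Set.Elem s),
      RelMap R (fun k => (x k : B)) ↔ RelMap R (fun k => j (x k))) ∧
    (∀ (n : ℕ) (F : L.Functions n) (x : Fin n → Set.Elem s),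
      (∀ h : funMap F (fun k => (x k : B)) ∈ s,
        funMap F (fun k => j (x k)) = j ⟨funMap F (fun k => (x k : B)), h⟩) ∧
      (∀ y : Set.Elem s, funMap F (fun k => j (x k)) = j y →
        ∃ h : funMap F (fun k => (x k : B)) ∈ s,
          j ⟨funMap F (fun k => (x k : B)), h⟩ = j y))

universe u v w

section Frag

variable {L : FirstOrder.Language}

variable {B : Type*} [L.Structure B] {N : Type*} [L.Structure N] {C : Type*} [L.Structure C]

theorem hasFragment_self (s : Set B) : HasFragment L s B := by
  refine ⟨Subtype.val, Subtype.val_injective, fun n R x => Iff.rfl, fun n F x =>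
    ⟨fun h => rfl, fun y hy => ?_⟩⟩
  refine ⟨by rw [hy]; exact y.2, ?_⟩
  simpa using hy

theorem HasFragment.mono {s s' : Set B} (hss : s ⊆ s') (h : HasFragment L s' N) :
    HasFragment L s N := by
  obtain ⟨j, hinj, hrel, hfun⟩ := h
  refine ⟨fun x => j ⟨x.1, hss x.2⟩, fun x y hxy => ?_, fun n R x => hrel n R fun k => ⟨(x k).1, hss (x k).2⟩,
    fun n F x => ?_⟩
  · have h2 := hinj hxy
    rw [Subtype.mk_eq_mk] at h2
    exact Subtype.ext h2
  · constructor
    · intro h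
      exact (hfun n F fun k => ⟨(x k).1, hss (x k).2⟩).1 (hss h)
    · intro y hy
      obtain ⟨h', hj⟩ := (hfun n F fun k => ⟨(x k).1, hss (x k).2⟩).2 ⟨y.1, hss y.2⟩ hy
      have hmem : funMap F (fun k => ((x k : B))) = (y : B) := congrArg Subtype.val (hinj hj)
      refine ⟨by rw [hmem]; exact y.2, ?_⟩
      convert hj using 2

end Frag

namespace ThetaAux

variable {L : FirstOrder.Language}

section Frag

variable {B : Type*} [L.Structure B] {N : Type*} [L.Structure N] {C : Type*} [L.Structure C]

/-- Two tuples (possibly in different structures) with the same quantifier-free pattern. -/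
def SamePatt (L : FirstOrder.Language) {B : Type*} [L.Structure B] {C : Type*} [L.Structure C]
    {m : ℕ} (b : Fin m → B) (c : Fin m → C) : Prop :=
  (∀ i j, b i = b j ↔ c i = c j) ∧
  (∀ (k : ℕ) (R : L.Relations k) (v : Fin k → Fin m),
    RelMap R (fun q => b (v q)) ↔ RelMap R (fun q => c (v q))) ∧
  (∀ (k : ℕ) (F : L.Functions k) (v : Fin k → Fin m) (i : Fin m),
    funMap F (fun q => b (v q)) = b i ↔ funMap F (fun q => c (v q)) = c i)

theorem SamePatt.symm {m : ℕ} {b : Fin m → B} {c : Fin m → C} (h : SamePatt L b c) :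
    SamePatt L c b :=
  ⟨fun i j => (h.1 i j).symm, fun k R v => (h.2.1 k R v).symm, fun k F v i => (h.2.2 k F v i).symm⟩

theorem SamePatt.transfer {m : ℕ} {b : Fin m → B} {c : Fin m → C} (hp : SamePatt L b c)
    (h : HasFragment L (Set.range c) N) : HasFragment L (Set.range b) N := by
  classical
  obtain ⟨j, hinj, hrel, hfun⟩ := h
  have hcr : ∀ i : Fin m, c i ∈ Set.range c := fun i => Set.mem_range_self i
  set idx : Set.Elem (Set.range b) → Fin m := fun x => x.2.choose with hidx
  have hspec : ∀ x : Set.Elem (Set.range b), b (idx x) = (x : B) := fun x => x.2.choose_spec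
  set jb : Set.Elem (Set.range b) → N := fun x => j ⟨c (idx x), hcr _⟩ with hjb
  have key : ∀ (x : Set.Elem (Set.range b)) (i : Fin m), (x : B) = b i →
      jb x = j ⟨c i, hcr i⟩ := by
    intro x i hx
    have : b (idx x) = b i := by rw [hspec x, hx]
    have hc : c (idx x) = c i := (hp.1 _ _).1 this
    simp [hjb, hc]
  refine ⟨jb, ?_, ?_, ?_⟩
  · intro x y hxy
    have : c (idx x) = c (idx y) := by
      have := hinj hxy
      exact congrArg Subtype.val this
    have hb : b (idx x) = b (idx y) := (hp.1 _ _).2 this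
    apply Subtype.ext
    rw [← hspec x, ← hspec y, hb]
  · intro n R x
    set v : Fin n → Fin m := fun q => idx (x q) with hv
    have hbv : (fun q => ((x q) : B)) = fun q => b (v q) := funext fun q => (hspec (x q)).symm
    have h1 : RelMap R (fun q => ((x q) : B)) ↔ RelMap R (fun q => c (v q)) := by
      rw [hbv]; exact hp.2.1 n R v
    have h2 := hrel n R fun q => ⟨c (v q), hcr _⟩
    exact h1.trans h2
  · intro n F x
    set v : Fin n → Fin m := fun q => idx (x q) with hv
    have hbv : (fun q => ((x q) : B)) = fun q => b (v q) := funext fun q => (hspec (x q)).symm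
    set xc : Fin n → Set.Elem (Set.range c) := fun q => ⟨c (v q), hcr _⟩ with hxc
    have hxcv : (fun q => ((xc q) : C)) = fun q => c (v q) := rfl
    have hjbx : (fun q => jb (x q)) = fun q => j (xc q) := rfl
    constructor
    · intro h
      obtain ⟨i₀, hi₀⟩ := id h
      have hbi : funMap F (fun q => b (v q)) = b i₀ := by rw [← hbv, ← hi₀]
      have hci : funMap F (fun q => c (v q)) = c i₀ := (hp.2.2 n F v i₀).1 hbi
      have hmem : funMap F (fun q => ((xc q) : C)) ∈ Set.range c := by
        rw [hxcv, hci]; exact hcr i₀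
      have := (hfun n F xc).1 hmem
      rw [hjbx, this]
      have h1 : jb ⟨funMap F (fun q => ((x q) : B)), h⟩ = j ⟨c i₀, hcr i₀⟩ := by
        apply key
        show funMap F (fun q => ((x q) : B)) = b i₀
        rw [hbv]; exact hbi
      rw [h1]
      congr 1
      apply Subtype.ext
      show funMap F (fun q => ((xc q) : C)) = c i₀
      rw [hxcv]; exact hci
    · intro y hy
      have hyj : jb y = j ⟨c (idx y), hcr _⟩ := rfl
      rw [hjbx, hyj] at hy
      obtain ⟨h', hj⟩ := (hfun n F xc).2 ⟨c (idx y), hcr _⟩ hy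
      have hceq : funMap F (fun q => ((xc q) : C)) = c (idx y) := congrArg Subtype.val (hinj hj)
      have hceq' : funMap F (fun q => c (v q)) = c (idx y) := by rw [← hxcv]; exact hceq
      have hbeq : funMap F (fun q => b (v q)) = b (idx y) := (hp.2.2 n F v (idx y)).2 hceq'
      have hbeq' : funMap F (fun q => ((x q) : B)) = b (idx y) := by rw [hbv]; exact hbeq
      refine ⟨by rw [hbeq']; exact Set.mem_range_self _, ?_⟩
      rw [key _ (idx y) hbeq', hyj]

end Frag

section Patt

variable (L : FirstOrder.Language) (m : ℕ)

/-- Index for relation facts about an `m`-tuple. -/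
def RIdx := Σ p : (Σ k, L.Relations k), (Fin p.1 → Fin m)

/-- Index for function facts about an `m`-tuple. -/
def FIdx := Σ p : (Σ k, L.Functions k), (Fin p.1 → Fin m)

instance [Finite (Σ k, L.Relations k)] : Finite (RIdx L m) := by
  unfold RIdx; infer_instance

instance [Finite (Σ k, L.Functions k)] : Finite (FIdx L m) := by
  unfold FIdx; infer_instance

/-- An abstract quantifier-free pattern for an `m`-tuple. -/
structure Patt where
  e : Fin m → Fin m → Bool
  r : RIdx L m → Bool
  f : FIdx L m → Option (Fin m)

instance [Finite (Σ k, L.Relations k)] [Finite (Σ k, L.Functions k)] : Finite (Patt L m) := by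
  refine Finite.of_injective (fun t => (t.e, t.r, t.f)) ?_
  rintro ⟨e, r, f⟩ ⟨e', r', f'⟩ h
  simp only [Prod.mk.injEq] at h
  obtain ⟨h1, h2, h3⟩ := h
  subst h1; subst h2; subst h3; rfl

variable {L m}

/-- A tuple `b` matches the pattern `t`. -/
def Matches {B : Type*} [L.Structure B] (t : Patt L m) (b : Fin m → B) : Prop :=
  (∀ i j, t.e i j = true ↔ b i = b j) ∧
  (∀ r : RIdx L m, t.r r = true ↔ RelMap r.1.2 (fun q => b (r.2 q))) ∧
  (∀ fi : FIdx L m,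
    (∀ i, t.f fi = some i → funMap fi.1.2 (fun q => b (fi.2 q)) = b i) ∧
    (t.f fi = none → ∀ i, funMap fi.1.2 (fun q => b (fi.2 q)) ≠ b i))

theorem exists_matches {B : Type*} [L.Structure B] (b : Fin m → B) :
    ∃ t : Patt L m, Matches t b := by
  classical
  refine ⟨⟨fun i j => decide (b i = b j), fun r => decide (RelMap r.1.2 (fun q => b (r.2 q))),
    fun fi => if h : ∃ i, funMap fi.1.2 (fun q => b (fi.2 q)) = b i then some h.choose
      else none⟩, fun i j => by simp, fun r => by simp, fun fi => ?_⟩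
  constructor
  · intro i hi
    by_cases h : ∃ i, funMap fi.1.2 (fun q => b (fi.2 q)) = b i
    · simp only [dif_pos h, Option.some.injEq] at hi
      rw [← hi]
      exact h.choose_spec
    · simp [dif_neg h] at hi
  · intro hnone i
    by_cases h : ∃ i, funMap fi.1.2 (fun q => b (fi.2 q)) = b i
    · simp [dif_pos h] at hnone
    · exact fun hc => h ⟨i, hc⟩

theorem Matches.samePatt {B : Type*} [L.Structure B] {C : Type*} [L.Structure C]
    {t : Patt L m} {b : Fin m → B} {c : Fin m → C} (hb : Matches t b) (hc : Matches t c) :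
    SamePatt L b c := by
  refine ⟨fun i j => ((hb.1 i j).symm.trans (hc.1 i j)), fun k R v => ?_, fun k F v i => ?_⟩
  · exact ((hb.2.1 ⟨⟨k, R⟩, v⟩).symm.trans (hc.2.1 ⟨⟨k, R⟩, v⟩))
  · set fi : FIdx L m := ⟨⟨k, F⟩, v⟩ with hfi
    rcases ht : t.f fi with _ | i₀
    · constructor
      · intro hbe
        exact absurd hbe ((hb.2.2 fi).2 ht i)
      · intro hce
        exact absurd hce ((hc.2.2 fi).2 ht i)
    · have hbe := (hb.2.2 fi).1 i₀ ht
      have hce := (hc.2.2 fi).1 i₀ ht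
      constructor
      · intro h
        have : b i₀ = b i := by rw [← hbe]; exact h
        have : c i₀ = c i := (hc.1 i₀ i).1 ((hb.1 i₀ i).2 this)
        rw [hce]; exact this
      · intro h
        have : c i₀ = c i := by rw [← hce]; exact h
        have : b i₀ = b i := (hb.1 i₀ i).1 ((hc.1 i₀ i).2 this)
        rw [hbe]; exact this

theorem Matches.congr {B : Type*} [L.Structure B] {C : Type*} [L.Structure C]
    {t : Patt L m} {b : Fin m → B} {c : Fin m → C} (hb : Matches t b) (hp : SamePatt L b c) :
    Matches t c := by
  refine ⟨fun i j => (hb.1 i j).trans (hp.1 i j), fun r => (hb.2.1 r).trans (hp.2.1 _ _ _),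
    fun fi => ?_⟩
  constructor
  · intro i hi
    exact (hp.2.2 fi.1.1 fi.1.2 fi.2 i).1 ((hb.2.2 fi).1 i hi)
  · intro hnone i hc
    exact (hb.2.2 fi).2 hnone i ((hp.2.2 fi.1.1 fi.1.2 fi.2 i).2 hc)

theorem samePatt_val {M : Type*} [L.Structure M] (S : L.Substructure M) (b : Fin m → S) :
    SamePatt L b (fun i => (b i : M)) := by
  refine ⟨fun i j => Subtype.ext_iff, fun k R v => Iff.rfl, fun k F v i => ?_⟩
  rw [Subtype.ext_iff]
  rfl

end Patt

section Formulas

variable {L : FirstOrder.Language} {m : ℕ}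

/-- The `i`-th variable as a term. -/
def xT (i : Fin m) : L.Term (Empty ⊕ Fin m) := Term.var (Sum.inr i)

/-- Finite conjunction over a finite index type. -/
noncomputable def allF {ι : Type*} [Fintype ι] (g : ι → L.BoundedFormula Empty m) :
    L.BoundedFormula Empty m :=
  (Finset.univ.toList.map g).foldr (· ⊓ ·) ⊤

theorem realize_allF {ι : Type*} [Fintype ι] (g : ι → L.BoundedFormula Empty m)
    {M : Type*} [L.Structure M] {v : Empty → M} {xs : Fin m → M} :
    (allF g).Realize v xs ↔ ∀ i, (g i).Realize v xs := by
  rw [allF, BoundedFormula.realize_foldr_inf]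
  simp

theorem isQF_foldr_inf (l : List (L.BoundedFormula Empty m))
    (h : ∀ ψ ∈ l, ψ.IsQF) : (l.foldr (· ⊓ ·) ⊤).IsQF := by
  induction l with
  | nil => exact BoundedFormula.IsQF.top
  | cons a l ih =>
    exact (h a List.mem_cons_self).inf (ih fun ψ hψ => h ψ (List.mem_cons_of_mem a hψ))

theorem isQF_foldr_sup (l : List (L.BoundedFormula Empty m))
    (h : ∀ ψ ∈ l, ψ.IsQF) : (l.foldr (· ⊔ ·) ⊥).IsQF := by
  induction l with
  | nil => exact BoundedFormula.isQF_bot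
  | cons a l ih =>
    exact (h a List.mem_cons_self).sup (ih fun ψ hψ => h ψ (List.mem_cons_of_mem a hψ))

theorem isQF_allF {ι : Type*} [Fintype ι] (g : ι → L.BoundedFormula Empty m)
    (h : ∀ i, (g i).IsQF) : (allF g).IsQF := by
  apply isQF_foldr_inf
  intro ψ hψ
  simp only [List.mem_map, Finset.mem_toList] at hψ
  obtain ⟨i, _, rfl⟩ := hψ
  exact h i

/-- The quantifier-free description of the pattern `t`. -/
noncomputable def delta [Fintype (RIdx L m)] [Fintype (FIdx L m)] (t : Patt L m) :
    L.BoundedFormula Empty m :=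
  allF (fun p : Fin m × Fin m =>
      if t.e p.1 p.2 = true then Term.bdEqual (xT p.1) (xT p.2)
      else (Term.bdEqual (xT p.1) (xT p.2)).not) ⊓
    (allF (fun r : RIdx L m =>
      if t.r r = true then r.1.2.boundedFormula (fun q => xT (r.2 q))
      else (r.1.2.boundedFormula (fun q => xT (r.2 q))).not) ⊓
    allF (fun fi : FIdx L m =>
      match t.f fi with
      | some i => Term.bdEqual (Term.func fi.1.2 (fun q => xT (fi.2 q))) (xT i)
      | none => allF (fun i : Fin m =>
          (Term.bdEqual (Term.func fi.1.2 (fun q => xT (fi.2 q))) (xT i)).not)))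

theorem isQF_delta [Fintype (RIdx L m)] [Fintype (FIdx L m)] (t : Patt L m) :
    (delta t).IsQF := by
  refine (isQF_allF _ fun p => ?_).inf ((isQF_allF _ fun r => ?_).inf (isQF_allF _ fun fi => ?_))
  · split
    · exact (BoundedFormula.IsAtomic.equal _ _).isQF
    · exact (BoundedFormula.IsAtomic.equal _ _).isQF.not
  · split
    · exact (BoundedFormula.IsAtomic.rel _ _).isQF
    · exact (BoundedFormula.IsAtomic.rel _ _).isQF.not
  · rcases t.f fi with _ | i
    · exact isQF_allF _ fun i => (BoundedFormula.IsAtomic.equal _ _).isQF.not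
    · exact (BoundedFormula.IsAtomic.equal _ _).isQF

theorem realize_delta [Fintype (RIdx L m)] [Fintype (FIdx L m)] (t : Patt L m)
    {M : Type*} [L.Structure M] {v : Empty → M} {xs : Fin m → M} :
    (delta t).Realize v xs ↔ Matches t xs := by
  rw [delta, BoundedFormula.realize_inf, BoundedFormula.realize_inf,
    realize_allF, realize_allF, realize_allF]
  constructor
  · rintro ⟨h1, h2, h3⟩
    refine ⟨fun i j => ?_, fun r => ?_, fun fi => ?_⟩
    · have := h1 (i, j)
      by_cases h : t.e i j = true
      · rw [if_pos h] at this
        simp only [BoundedFormula.realize_bdEqual] at this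
        simpa [h, xT] using this
      · rw [if_neg h] at this
        simp only [BoundedFormula.realize_not, BoundedFormula.realize_bdEqual] at this
        constructor
        · intro hc; exact absurd hc h
        · intro hc; exact absurd (by simpa [xT] using hc) this
    · have := h2 r
      by_cases h : t.r r = true
      · rw [if_pos h] at this
        simp only [BoundedFormula.realize_rel] at this
        simp only [h, true_iff]
        simpa [xT] using this
      · rw [if_neg h] at this
        simp only [BoundedFormula.realize_not, BoundedFormula.realize_rel] at this
        constructor
        · intro hc; exact absurd hc h
        · intro hc; exact absurd (by simpa [xT] using hc) this
    · have := h3 fi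
      constructor
      · intro i hi
        rw [hi] at this
        simp only [BoundedFormula.realize_bdEqual, Term.realize_func] at this
        simpa [xT] using this
      · intro hnone i
        rw [hnone] at this
        rw [realize_allF] at this
        have := this i
        simp only [BoundedFormula.realize_not, BoundedFormula.realize_bdEqual,
          Term.realize_func] at this
        intro hc
        exact this (by simpa [xT] using hc)
  · rintro ⟨h1, h2, h3⟩
    refine ⟨fun p => ?_, fun r => ?_, fun fi => ?_⟩
    · by_cases h : t.e p.1 p.2 = true
      · rw [if_pos h]
        simp only [BoundedFormula.realize_bdEqual]
        simpa [xT] using (h1 p.1 p.2).1 h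
      · rw [if_neg h]
        simp only [BoundedFormula.realize_not, BoundedFormula.realize_bdEqual]
        intro hc
        exact h ((h1 p.1 p.2).2 (by simpa [xT] using hc))
    · by_cases h : t.r r = true
      · rw [if_pos h]
        simp only [BoundedFormula.realize_rel]
        simpa [xT] using (h2 r).1 h
      · rw [if_neg h]
        simp only [BoundedFormula.realize_not, BoundedFormula.realize_rel]
        intro hc
        exact h ((h2 r).2 (by simpa [xT] using hc))
    · rcases ht : t.f fi with _ | i
      · rw [realize_allF]
        intro i
        simp only [BoundedFormula.realize_not, BoundedFormula.realize_bdEqual,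
          Term.realize_func]
        intro hc
        exact (h3 fi).2 ht i (by simpa [xT] using hc)
      · simp only [BoundedFormula.realize_bdEqual, Term.realize_func]
        simpa [xT] using (h3 fi).1 i ht

end Formulas

section Zero

variable {L : FirstOrder.Language} {m : ℕ}

theorem finite_relations0 [Finite (Σ k, L.Relations k)] : Finite (L.Relations 0) := by
  refine Finite.of_injective (fun R => (⟨0, R⟩ : Σ k, L.Relations k)) ?_
  intro a b h
  simpa using h

/-- The quantifier-free description of a pattern of nullary relations. -/
noncomputable def delta0 [Fintype (L.Relations 0)] (p : L.Relations 0 → Bool) :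
    L.BoundedFormula Empty m :=
  allF (fun R : L.Relations 0 =>
    if p R = true then R.boundedFormula Fin.elim0 else (R.boundedFormula Fin.elim0).not)

theorem isQF_delta0 [Fintype (L.Relations 0)] (p : L.Relations 0 → Bool) :
    (delta0 (m := m) p).IsQF := by
  refine isQF_allF _ fun R => ?_
  split
  · exact (BoundedFormula.IsAtomic.rel _ _).isQF
  · exact (BoundedFormula.IsAtomic.rel _ _).isQF.not

theorem realize_delta0 [Fintype (L.Relations 0)] (p : L.Relations 0 → Bool)
    {M : Type*} [L.Structure M] {v : Empty → M} {xs : Fin m → M} :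
    (delta0 p).Realize v xs ↔ ∀ R : L.Relations 0, (RelMap (M := M) R Fin.elim0 ↔ p R = true) := by
  have hfe : ∀ f : Fin 0 → M, f = Fin.elim0 := fun f => funext fun i => i.elim0
  rw [delta0, realize_allF]
  refine forall_congr' fun R => ?_
  by_cases h : p R = true
  · rw [if_pos h]
    simp only [BoundedFormula.realize_rel]
    rw [hfe (fun i => Term.realize (Sum.elim v xs) (Fin.elim0 i))]
    simp [h]
  · rw [if_neg h]
    simp only [BoundedFormula.realize_not, BoundedFormula.realize_rel]
    rw [hfe (fun i => Term.realize (Sum.elim v xs) (Fin.elim0 i))]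
    constructor
    · intro hr
      constructor
      · intro hc; exact absurd hc hr
      · intro hc; exact absurd hc h
    · intro hiff hc
      exact h (hiff.1 hc)

theorem functions0_isEmpty {M : Type*} [L.Structure M] (S : L.Substructure M)
    (h : IsEmpty S) : IsEmpty (L.Functions 0) :=
  ⟨fun F => h.false ⟨funMap F Fin.elim0, S.fun_mem F Fin.elim0 (fun i => i.elim0)⟩⟩

theorem exists_empty_substructure {N : Type*} [L.Structure N] (h0 : IsEmpty (L.Functions 0)) :
    ∃ T : L.Substructure N, IsEmpty T := by
  refine ⟨⟨∅, ?_⟩, ⟨fun x => Set.notMem_empty _ x.2⟩⟩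
  intro n f x hx
  cases n with
  | zero => exact h0.elim f
  | succ n => exact absurd (hx 0) (Set.notMem_empty _)

theorem nonempty_equiv_of_empty {M N : Type*} [L.Structure M] [L.Structure N]
    (hM : IsEmpty M) (hN : IsEmpty N) (h0 : IsEmpty (L.Functions 0))
    (hrel : ∀ R : L.Relations 0, RelMap (M := M) R Fin.elim0 ↔ RelMap (M := N) R Fin.elim0) :
    Nonempty (M ≃[L] N) := by
  refine ⟨⟨⟨fun x => (hM.false x).elim, fun y => (hN.false y).elim,
    fun x => (hM.false x).elim, fun y => (hN.false y).elim⟩, ?_, ?_⟩⟩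
  · intro n f x
    cases n with
    | zero => exact h0.elim f
    | succ n => exact (hM.false (x 0)).elim
  · intro n r x
    cases n with
    | zero =>
      have h1 : ((fun x => (hM.false x).elim) ∘ x : Fin 0 → N) = Fin.elim0 :=
        funext fun i => i.elim0
      have h2 : x = Fin.elim0 := funext fun i => i.elim0
      show RelMap r ((fun x => (hM.false x).elim) ∘ x) ↔ RelMap r x
      rw [h1, h2]
      exact (hrel r).symm
    | succ n => exact (hM.false (x 0)).elim

end Zero

section Good

variable {L : FirstOrder.Language}

/-- The target property: some substructure satisfies `φ`. -/
def Theta (φ : L.Sentence) (N : Type u) [L.Structure N] : Prop :=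
  ∃ S : L.Substructure N, (S : Type u) ⊨ φ

/-- The set `s` forces `θ(φ)` in every nonempty structure having the fragment `(B, s)`. -/
def Forces (φ : L.Sentence) {B : Type v} [L.Structure B] (s : Set B) : Prop :=
  ∀ (N : Type u) [L.Structure N], Nonempty N → HasFragment L s N → Theta.{u} φ N

/-- A pattern is good if every nonempty structure containing a tuple matching it has a
substructure satisfying `φ`. -/
def Good (φ : L.Sentence) (m : ℕ) (t : Patt L m) : Prop :=
  ∀ (N : Type u) [L.Structure N], Nonempty N →
    (∃ y : Fin m → N, Matches t y) → ∃ S : L.Substructure N, (S : Type u) ⊨ φ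

/-- A nullary-relation pattern is good if every nonempty structure realizing it has a
substructure satisfying `φ`. -/
def EGood (φ : L.Sentence) (p : L.Relations 0 → Bool) : Prop :=
  ∀ (N : Type u) [L.Structure N], Nonempty N →
    (∀ R : L.Relations 0, RelMap (M := N) R Fin.elim0 ↔ p R = true) →
    ∃ S : L.Substructure N, (S : Type u) ⊨ φ

end Good

end ThetaAux


open ThetaAux Filter

/-- main theorem, case κ = ω: for a finite language `L` and a sentence `φ`,
the following are equivalent: (i) `θ(φ)` is expressible by an existential sentence;
(ii) `θ(φ)` is expressible by a first-order sentence; (iii) every nonempty model of `φ` has a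
finite fragment forcing `θ(φ)` in every nonempty structure having that fragment; (iv) there is
a uniform finite bound `n` on the size of such fragments. -/
theorem theta_firstOrder_expressibility_tfae {L : FirstOrder.Language}
    [Finite (Σ k, L.Functions k)] [Finite (Σ k, L.Relations k)] (φ : L.Sentence) :
    List.TFAE
      [∃ (m : ℕ) (χ : L.BoundedFormula Empty m), χ.IsQF ∧
          ∀ (M : Type u) [L.Structure M], Nonempty M →
            (M ⊨ χ.exs ↔ ∃ S : L.Substructure M, (S : Type _) ⊨ φ),
        ∃ χ : L.Sentence, ∀ (M : Type u) [L.Structure M], Nonempty M →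
          (M ⊨ χ ↔ ∃ S : L.Substructure M, (S : Type _) ⊨ φ),
        ∀ (B : Type u) [L.Structure B], Nonempty B → B ⊨ φ →
          ∃ s : Set B, s.Finite ∧
            ∀ (N : Type u) [L.Structure N], Nonempty N → HasFragment L s N →
              ∃ S : L.Substructure N, (S : Type _) ⊨ φ,
        ∃ n : ℕ, ∀ (B : Type u) [L.Structure B], Nonempty B → B ⊨ φ →
          ∃ s : Set B, s.Finite ∧ s.ncard ≤ n ∧
            ∀ (N : Type u) [L.Structure N], Nonempty N → HasFragment L s N →
              ∃ S : L.Substructure N, (S : Type _) ⊨ φ] := by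
  classical
  tfae_have 1 → 2 := by
    rintro ⟨m, χ, _hqf, h⟩
    exact ⟨χ.exs, h⟩
  tfae_have 2 → 3 := by
    rintro ⟨χ, hχ⟩
    intro B instB hBne hBφ
    by_contra hcon
    have key : ∀ t : Finset B, Nonempty (Σ' (N : Type u) (instN : L.Structure N),
        Nonempty N ∧ @HasFragment L B instB (↑t : Set B) N instN ∧
          ¬ @Sentence.Realize L N instN χ) := by
      intro t
      by_contra hne'
      refine hcon ⟨(↑t : Set B), t.finite_toSet, ?_⟩
      intro N instN hne hfr
      refine (hχ N hne).1 ?_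
      by_contra hnr
      exact hne' ⟨⟨N, instN, hne, hfr, hnr⟩⟩
    set pk := fun t => Classical.choice (key t) with hpk
    set Nt : Finset B → Type u := fun t => (pk t).1 with hNt
    letI instNt : ∀ t, L.Structure (Nt t) := fun t => (pk t).2.1
    have hNne : ∀ t, Nonempty (Nt t) := fun t => (pk t).2.2.1
    have hfr' : ∀ t : Finset B, HasFragment L (↑t : Set B) (Nt t) := fun t => (pk t).2.2.2.1
    have hnchi : ∀ t, ¬ Nt t ⊨ χ := fun t => (pk t).2.2.2.2
    choose jj hjj using hfr'
    set U : Ultrafilter (Finset B) := Ultrafilter.of atTop with hUdef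
    have hU : (U : Filter (Finset B)) ≤ atTop := Ultrafilter.of_le _
    letI : ∀ t, Nonempty (Nt t) := hNne
    set NN := ((U : Filter (Finset B)).Product Nt) with hNN
    set jfun : B → ∀ t, Nt t := fun b t => if h : b ∈ t then jj t ⟨b, h⟩ else (hNne t).some
      with hjfd
    set j : B → NN := fun b => (↑(jfun b) : NN) with hjdef
    have hmem : ∀ t0 : Finset B, ∀ᶠ t in (U : Filter (Finset B)), t0 ⊆ t := by
      intro t0
      exact (Filter.eventually_atTop.2 ⟨t0, fun t ht => ht⟩).filter_mono hU
    have hquot : ∀ f g : (∀ t, Nt t),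
        ((↑f : NN) = (↑g : NN)) ↔ ∀ᶠ t in (U : Filter (Finset B)), f t = g t :=
      fun f g => Quotient.eq'
    obtain ⟨emb⟩ : Nonempty (B ↪[L] NN) := by
      refine ⟨⟨⟨j, ?_⟩, ?_, ?_⟩⟩
      · intro a b hab
        rw [hjdef] at hab
        simp only at hab
        replace hab := (hquot (jfun a) (jfun b)).1 hab
        obtain ⟨t, h1, h2⟩ := (hab.and (hmem {a, b})).exists
        have ha : a ∈ t := h2 (Finset.mem_insert_self _ _)
        have hb : b ∈ t := h2 (Finset.mem_insert_of_mem (Finset.mem_singleton_self _))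
        rw [hjfd] at h1
        simp only [dif_pos ha, dif_pos hb] at h1
        have := (hjj t).1 h1
        exact congrArg Subtype.val this
      · intro n F x
        show (↑(jfun (funMap F x)) : NN) = funMap F fun i => (↑(jfun (x i)) : NN)
        rw [Ultraproduct.funMap_cast F fun i => jfun (x i)]
        rw [hquot]
        refine (hmem (insert (funMap F x) (Finset.image x Finset.univ))).mono ?_
        intro t ht
        have hfx : funMap F x ∈ t := ht (Finset.mem_insert_self _ _)
        have hx : ∀ i, x i ∈ t := fun i =>
          ht (Finset.mem_insert_of_mem (Finset.mem_image_of_mem x (Finset.mem_univ i)))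
        rw [hjfd]
        simp only [dif_pos hfx, dif_pos (hx _)]
        have h1 := ((hjj t).2.2 n F fun i => ⟨x i, hx i⟩).1 hfx
        exact h1.symm
      · intro n r x
        show RelMap r (fun i => (↑(jfun (x i)) : NN)) ↔ RelMap r x
        have hLHS : RelMap r (fun i => (↑(jfun (x i)) : NN)) ↔
            ∀ᶠ t in (U : Filter (Finset B)), RelMap r fun i => jfun (x i) t :=
          relMap_quotient_mk' (s := (U : Filter (Finset B)).productSetoid Nt) r
            fun i => jfun (x i)
        rw [hLHS]
        have hev : ∀ᶠ t in (U : Filter (Finset B)),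
            ((RelMap r fun i => jfun (x i) t) ↔ RelMap r x) := by
          refine (hmem (Finset.image x Finset.univ)).mono ?_
          intro t ht
          have hx : ∀ i, x i ∈ t := fun i => ht (Finset.mem_image_of_mem x (Finset.mem_univ i))
          have h2 := (hjj t).2.1 n r fun i => ⟨x i, hx i⟩
          rw [hjfd]
          simp only [dif_pos (hx _)]
          exact h2.symm
        constructor
        · intro h
          obtain ⟨t, h1, h2⟩ := (h.and hev).exists
          exact h2.1 h1
        · intro h
          exact hev.mono fun t ht => ht.2 h
    have hNNne : Nonempty NN := inferInstance
    have hrange : ((emb.toHom.range : L.Substructure NN) : Type u) ⊨ φ :=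
      (StrongHomClass.realize_sentence emb.equivRange φ).1 hBφ
    have hNNχ : NN ⊨ χ := (hχ NN hNNne).2 ⟨emb.toHom.range, hrange⟩
    rw [Ultraproduct.sentence_realize] at hNNχ
    obtain ⟨t, ht⟩ := hNNχ.exists
    exact hnchi t ht
  tfae_have 3 → 4 := by
    intro h3
    by_contra hcon
    have key : ∀ n : ℕ, Nonempty (Σ' (B : Type u) (instB : L.Structure B),
        Nonempty B ∧ @Sentence.Realize L B instB φ ∧
          ∀ s : Set B, s.Finite → s.ncard ≤ n → ¬ @Forces L φ B instB s) := by
      intro n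
      by_contra hne'
      refine hcon ⟨n, ?_⟩
      intro B instB hBne hBφ
      by_contra hs
      refine hne' ⟨⟨B, instB, hBne, hBφ, ?_⟩⟩
      intro s hsf hsc hforce
      exact hs ⟨s, hsf, hsc, hforce⟩
    set pk := fun n => Classical.choice (key n) with hpk
    set Bn : ℕ → Type u := fun n => (pk n).1 with hBn
    letI instBn : ∀ n, L.Structure (Bn n) := fun n => (pk n).2.1
    have hBne : ∀ n, Nonempty (Bn n) := fun n => (pk n).2.2.1
    have hBφ : ∀ n, Bn n ⊨ φ := fun n => (pk n).2.2.2.1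
    have hbad : ∀ n, ∀ s : Set (Bn n), s.Finite → s.ncard ≤ n → ¬ Forces.{u} φ s :=
      fun n => (pk n).2.2.2.2
    set U : Ultrafilter ℕ := Ultrafilter.of atTop with hUdef
    have hU : (U : Filter ℕ) ≤ atTop := Ultrafilter.of_le _
    letI : ∀ n, Nonempty (Bn n) := hBne
    set BB := ((U : Filter ℕ).Product Bn) with hBB
    have hquot : ∀ f g : (∀ n, Bn n),
        ((↑f : BB) = (↑g : BB)) ↔ ∀ᶠ n in (U : Filter ℕ), f n = g n :=
      fun f g => Quotient.eq'
    have hBBφ : BB ⊨ φ := (Ultraproduct.sentence_realize φ).2 (Eventually.of_forall hBφ)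
    obtain ⟨s, hsfin, hsforce⟩ := h3 BB inferInstance hBBφ
    obtain ⟨m, gE, hg⟩ := hsfin.fin_embedding
    set g : Fin m → BB := ⇑gE with hgdef
    have hrep : ∀ i, ∃ fi : ∀ n, Bn n, (↑fi : BB) = g i := fun i => Quotient.exists_rep (g i)
    choose f hf using hrep
    have hcast : ∀ (k : ℕ) (v : Fin k → Fin m),
        (fun q => g (v q)) = fun q => (↑(f (v q)) : BB) :=
      fun k v => funext fun q => (hf (v q)).symm
    have hev1 : ∀ᶠ n in (U : Filter ℕ), ∀ i j, ((f i n = f j n) ↔ (g i = g j)) := by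
      rw [Filter.eventually_all]
      intro i
      rw [Filter.eventually_all]
      intro j
      by_cases hgij : g i = g j
      · have h1 : ((↑(f i) : BB) = (↑(f j) : BB)) := by rw [hf i, hf j]; exact hgij
        rw [hquot] at h1
        exact h1.mono fun n hn => iff_of_true hn hgij
      · have h1 : ¬((↑(f i) : BB) = (↑(f j) : BB)) := by rw [hf i, hf j]; exact hgij
        rw [hquot] at h1
        exact (Ultrafilter.eventually_not.2 h1).mono fun n hn => iff_of_false hn hgij
    have hev2 : ∀ᶠ n in (U : Filter ℕ), ∀ p : (Σ k, L.Relations k), ∀ v : Fin p.1 → Fin m,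
        (RelMap p.2 (fun q => f (v q) n) ↔ RelMap p.2 (fun q => g (v q))) := by
      rw [Filter.eventually_all]
      intro p
      rw [Filter.eventually_all]
      intro v
      have hq : RelMap p.2 (fun q => g (v q)) ↔
          ∀ᶠ n in (U : Filter ℕ), RelMap p.2 fun q => f (v q) n := by
        rw [hcast p.1 v]
        exact relMap_quotient_mk' (s := (U : Filter ℕ).productSetoid Bn) p.2 fun q => f (v q)
      by_cases hc : RelMap p.2 (fun q => g (v q))
      · exact (hq.1 hc).mono fun n hn => iff_of_true hn hc
      · exact (Ultrafilter.eventually_not.2 (fun hev => hc (hq.2 hev))).mono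
          fun n hn => iff_of_false hn hc
    have hev3 : ∀ᶠ n in (U : Filter ℕ), ∀ p : (Σ k, L.Functions k), ∀ v : Fin p.1 → Fin m,
        ∀ i, (funMap p.2 (fun q => f (v q) n) = f i n ↔
          funMap p.2 (fun q => g (v q)) = g i) := by
      rw [Filter.eventually_all]
      intro p
      rw [Filter.eventually_all]
      intro v
      rw [Filter.eventually_all]
      intro i
      have hq : funMap p.2 (fun q => g (v q)) = g i ↔
          ∀ᶠ n in (U : Filter ℕ), funMap p.2 (fun q => f (v q) n) = f i n := by
        rw [hcast p.1 v]
        show (funMap p.2 fun q => (↑(f (v q)) : BB)) = g i ↔ _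
        rw [Ultraproduct.funMap_cast p.2 fun q => f (v q), ← hf i]
        exact hquot _ _
      by_cases hc : funMap p.2 (fun q => g (v q)) = g i
      · exact (hq.1 hc).mono fun n hn => iff_of_true hn hc
      · exact (Ultrafilter.eventually_not.2 (fun hev => hc (hq.2 hev))).mono
          fun n hn => iff_of_false hn hc
    have hge : ∀ᶠ n in (U : Filter ℕ), m ≤ n :=
      (Filter.eventually_atTop.2 ⟨m, fun n hn => hn⟩).filter_mono hU
    obtain ⟨n₀, hh⟩ := (((hev1.and hev2).and hev3).and hge).exists
    obtain ⟨⟨⟨hp1, hp2⟩, hp3⟩, hn₀⟩ := hh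
    set y : Fin m → Bn n₀ := fun i => f i n₀ with hy
    have hsp : SamePatt L y g :=
      ⟨hp1, fun k R v => hp2 ⟨k, R⟩ v, fun k F v i => hp3 ⟨k, F⟩ v i⟩
    have hyfin : (Set.range y).Finite := Set.finite_range y
    have hycard : (Set.range y).ncard ≤ n₀ := by
      have h1 : Set.range y = ↑(Finset.image y Finset.univ) := by
        simp [Finset.coe_image]
      rw [h1, Set.ncard_coe_finset]
      exact le_trans (le_trans Finset.card_image_le (by simp)) hn₀
    refine hbad n₀ (Set.range y) hyfin hycard ?_
    intro N instN hNne hfr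
    have h2 : HasFragment L (Set.range g) N := (hsp.symm).transfer hfr
    rw [hgdef, hg] at h2
    exact hsforce N hNne h2
  tfae_have 4 → 1 := by
    rintro ⟨n, h4⟩
    letI : Fintype (RIdx L n) := Fintype.ofFinite _
    letI : Fintype (FIdx L n) := Fintype.ofFinite _
    haveI hR0 : Finite (L.Relations 0) := finite_relations0
    letI : Fintype (L.Relations 0) := Fintype.ofFinite _
    letI : Fintype (Patt L n) := Fintype.ofFinite _
    letI : DecidablePred (Good.{u} φ n) := Classical.decPred _
    letI : DecidablePred (EGood.{u} φ) := Classical.decPred _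
    set glist : List (Patt L n) := (Finset.univ.filter (Good.{u} φ n)).toList with hglist
    set elist : List (L.Relations 0 → Bool) := (Finset.univ.filter (EGood.{u} φ)).toList
      with helist
    set χ : L.BoundedFormula Empty n :=
      (glist.map delta ++ elist.map (delta0 (m := n))).foldr (· ⊔ ·) ⊥ with hχdef
    refine ⟨n, χ, ?_, ?_⟩
    · refine isQF_foldr_sup _ ?_
      intro ψ hψ
      rcases List.mem_append.1 hψ with h | h
      · obtain ⟨t, _, rfl⟩ := List.mem_map.1 h
        exact isQF_delta t
      · obtain ⟨p, _, rfl⟩ := List.mem_map.1 h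
        exact isQF_delta0 p
    · intro M instM hMne
      have hiff : (M ⊨ χ.exs) ↔ ∃ xs : Fin n → M, χ.Realize (default : Empty → M) xs :=
        BoundedFormula.realize_exs
      constructor
      · intro hMχ
        obtain ⟨xs, hxs⟩ := hiff.1 hMχ
        rw [hχdef, BoundedFormula.realize_foldr_sup] at hxs
        obtain ⟨ψ, hmemψ, hψ⟩ := hxs
        rcases List.mem_append.1 hmemψ with h | h
        · obtain ⟨t, htmem, rfl⟩ := List.mem_map.1 h
          have hgood : Good.{u} φ n t := (Finset.mem_filter.1 (Finset.mem_toList.1 htmem)).2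
          exact hgood M hMne ⟨xs, (realize_delta t).1 hψ⟩
        · obtain ⟨p, hpmem, rfl⟩ := List.mem_map.1 h
          have hgood : EGood.{u} φ p := (Finset.mem_filter.1 (Finset.mem_toList.1 hpmem)).2
          exact hgood M hMne ((realize_delta0 p).1 hψ)
      · rintro ⟨S, hSφ⟩
        refine hiff.2 ?_
        rcases isEmpty_or_nonempty S with hSe | hSne
        · have h0 : IsEmpty (L.Functions 0) := functions0_isEmpty S hSe
          set p : L.Relations 0 → Bool := fun R => decide (RelMap (M := M) R Fin.elim0)
            with hpdef
          have hp : ∀ R : L.Relations 0, RelMap (M := M) R Fin.elim0 ↔ p R = true := by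
            intro R
            simp [hpdef]
          have hfe0 : ∀ {α : Type u} (fz : Fin 0 → α), fz = Fin.elim0 :=
            fun fz => funext fun i => i.elim0
          have hSrel : ∀ R : L.Relations 0,
              RelMap (M := S) R Fin.elim0 ↔ RelMap (M := M) R Fin.elim0 := by
            intro R
            show RelMap (M := M) R (fun i => ((Fin.elim0 i : S) : M)) ↔ _
            rw [hfe0 (fun i => ((Fin.elim0 i : S) : M))]
          have hE : EGood.{u} φ p := by
            intro N instN hNne hNp
            obtain ⟨T, hTE⟩ := exists_empty_substructure (N := N) h0
            have hTrel : ∀ R : L.Relations 0,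
                RelMap (M := T) R Fin.elim0 ↔ RelMap (M := N) R Fin.elim0 := by
              intro R
              show RelMap (M := N) R (fun i => ((Fin.elim0 i : T) : N)) ↔ _
              rw [hfe0 (fun i => ((Fin.elim0 i : T) : N))]
            have hrel : ∀ R : L.Relations 0,
                RelMap (M := S) R Fin.elim0 ↔ RelMap (M := T) R Fin.elim0 := by
              intro R
              rw [hSrel R, hTrel R, hp R, hNp R]
            obtain ⟨e⟩ := nonempty_equiv_of_empty hSe hTE h0 hrel
            exact ⟨T, (StrongHomClass.realize_sentence e φ).1 hSφ⟩
          have hpmem : delta0 (m := n) p ∈ glist.map delta ++ elist.map (delta0 (m := n)) := by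
            refine List.mem_append.2 (Or.inr (List.mem_map.2 ⟨p, ?_, rfl⟩))
            rw [helist, Finset.mem_toList, Finset.mem_filter]
            exact ⟨Finset.mem_univ _, hE⟩
          refine ⟨fun _ => Classical.arbitrary M, ?_⟩
          rw [hχdef, BoundedFormula.realize_foldr_sup]
          exact ⟨delta0 p, hpmem, (realize_delta0 p).2 hp⟩
        · obtain ⟨s, hsfin, hscard, hsforce⟩ := h4 S hSne hSφ
          set x0 : S := Classical.arbitrary S with hx0
          set l : List S := hsfin.toFinset.toList with hl
          have hlen : l.length ≤ n := by
            rw [hl, Finset.length_toList, ← Set.ncard_eq_toFinset_card s hsfin]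
            exact hscard
          set b : Fin n → S := fun i => l.getD i x0 with hb
          have hcov : s ⊆ Set.range b := by
            intro x hx
            have hxl : x ∈ l := by
              rw [hl, Finset.mem_toList, Set.Finite.mem_toFinset]
              exact hx
            obtain ⟨i, hi, hgx⟩ := List.mem_iff_getElem.1 hxl
            refine ⟨⟨i, lt_of_lt_of_le hi hlen⟩, ?_⟩
            show l.getD i x0 = x
            rw [List.getD_eq_getElem l x0 hi]
            exact hgx
          obtain ⟨t, hmt⟩ := exists_matches (L := L) b
          have hGood : Good.{u} φ n t := by
            intro N instN hNne hy
            obtain ⟨y, hmy⟩ := hy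
            have hsp : SamePatt L b y := hmt.samePatt hmy
            have h1 : HasFragment L (Set.range y) N := hasFragment_self _
            have h2 : HasFragment L (Set.range b) N := hsp.transfer h1
            have h3 : HasFragment L s N := h2.mono hcov
            exact hsforce N hNne h3
          have htmem : delta t ∈ glist.map delta ++ elist.map (delta0 (m := n)) := by
            refine List.mem_append.2 (Or.inl (List.mem_map.2 ⟨t, ?_, rfl⟩))
            rw [hglist, Finset.mem_toList, Finset.mem_filter]
            exact ⟨Finset.mem_univ _, hGood⟩
          refine ⟨fun i => ((b i : S) : M), ?_⟩
          rw [hχdef, BoundedFormula.realize_foldr_sup]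
          refine ⟨delta t, htmem, (realize_delta t).2 ?_⟩
          exact hmt.congr (samePatt_val S b)
  tfae_finish
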